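/- The map φ from pairs (σ, u) — where σ is an out-neighbour assignment on a rooted connected graph with exactly one directed cycle C and u ∈ C — to triples (σ_fix, v₀, u → u') as in the cycle-popping repair construction, is injective: σ and u can be uniquely recovered from (σ_fix, v₀, u → u'). -/

import Mathlib

/-- `C` is the vertex set of a directed cycle of the functional digraph of `σ`. -/
def IsFunCycleSet {V : Type*} (σ : V → V) (C : Set V) : Prop :=
  C.Nonempty ∧ (∀ x ∈ C, σ x ∈ C) ∧ (∀ x ∈ C, ∀ y ∈ C, ∃ n : ℕ, σ^[n] x = y) ∧
    ∀ x ∈ C, ∃ n : ℕ, 0 < n ∧ σ^[n] x = x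

/-- The data of the cycle-popping repair construction: `σ` is an out-neighbour
assignment on the connected rooted graph `(G, r)` whose functional digraph has a
unique directed cycle `C`; `u ∈ C`; `(v₀, v₁)` is an edge of `G` with `v₀` in the
tree component of `r` and `v₁` in the unicyclic component; `vs = [v₁, …, v_ℓ = u]`
is the σ-path from `v₁` to `u`; and `σfix` reverses this path (`σfix vᵢ = vᵢ₋₁`,
with `σfix v₁ = v₀`) and agrees with `σ` elsewhere. -/
def CPRepair {V : Type*} (G : SimpleGraph V) (r : V) (σ : V → V) (C : Set V)
    (u v₀ : V) (σfix : V → V) (vs : List V) : Prop :=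
  (∀ v, v ≠ r → G.Adj v (σ v)) ∧
  IsFunCycleSet σ C ∧ r ∉ C ∧
  (∀ C' : Set V, IsFunCycleSet σ C' → r ∉ C' → C' = C) ∧
  u ∈ C ∧
  vs ≠ [] ∧ vs.Nodup ∧ vs.getLast? = some u ∧ r ∉ vs ∧
  List.Chain' (fun a b => σ a = b) vs ∧
  Relation.ReflTransGen (fun a b => a ≠ r ∧ σ a = b) v₀ r ∧
  (∀ v₁ ∈ vs.head?, ¬ Relation.ReflTransGen (fun a b => a ≠ r ∧ σ a = b) v₁ r ∧
    G.Adj v₀ v₁ ∧ σfix v₁ = v₀) ∧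
  List.Chain' (fun a b => σfix b = a) vs ∧
  (∀ x, x ∉ vs → σfix x = σ x)



/-- Functional RTG to `r` gives an iterate hitting `r`. -/
lemma cp_rtg_iterate {V : Type*} {f : V → V} {r x : V}
    (h : Relation.ReflTransGen (fun a b => a ≠ r ∧ f a = b) x r) :
    ∃ n, f^[n] x = r := by
  induction h using Relation.ReflTransGen.head_induction_on with
  | refl => exact ⟨0, rfl⟩
  | head hab _ ih =>
    obtain ⟨n, hn⟩ := ih
    exact ⟨n + 1, by rw [Function.iterate_succ_apply, hab.2]; exact hn⟩

/-- Iterates starting in `vs` stay in `vs ∪ C`, hence never hit `r`. -/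
lemma cp_no_reach {V : Type*} {σ : V → V} {C : Set V} {r u : V} {vs : List V}
    (hC : ∀ x ∈ C, σ x ∈ C) (hrC : r ∉ C) (huC : u ∈ C)
    (hlast : vs.getLast? = some u) (hrvs : r ∉ vs)
    (hchain : List.Chain' (fun a b => σ a = b) vs) :
    ∀ x ∈ vs, ∀ n, σ^[n] x ≠ r := by
  have hne : vs ≠ [] := by rintro rfl; simp at hlast
  have hu : vs.getLast hne = u := by
    rw [List.getLast?_eq_getLast hne] at hlast; exact Option.some.inj hlast
  have key : ∀ y, (y ∈ vs ∨ y ∈ C) → (σ y ∈ vs ∨ σ y ∈ C) := by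
    rintro y (hy | hy)
    · by_cases hyu : y = u
      · exact Or.inr (by rw [hyu]; exact hC u huC)
      · obtain ⟨i, hi⟩ := List.get_of_mem hy
        have hilt : (i : ℕ) + 1 < vs.length := by
          rcases lt_or_eq_of_le (Nat.le_sub_one_of_lt i.2) with hlt | heq
          · omega
          · exfalso
            apply hyu
            rw [← hi, ← hu, List.getLast_eq_getElem hne, List.get_eq_getElem]
            congr 1
        have := List.isChain_iff_getElem.mp hchain i (by omega)
        simp only [List.get_eq_getElem] at hi
        rw [hi] at this
        exact Or.inl (this ▸ List.getElem_mem _)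
    · exact Or.inr (hC y hy)
  intro x hx n
  have : σ^[n] x ∈ vs ∨ σ^[n] x ∈ C := by
    induction n with
    | zero => exact Or.inl hx
    | succ n ih => rw [Function.iterate_succ_apply']; exact key _ ih
  rcases this with h | h
  · exact fun he => hrvs (he ▸ h)
  · exact fun he => hrC (he ▸ h)

/-- In a list whose head is `u` and which is a `σfix`-chain, the `k`-th entry is `σfix^[k] u`. -/
lemma cp_get_iterate {V : Type*} {σfix : V → V} :
    ∀ (ws : List V) (u : V), ws.head? = some u →
      List.Chain' (fun a b => σfix a = b) ws →
      ∀ k (hk : k < ws.length), ws.get ⟨k, hk⟩ = σfix^[k] u := by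
  intro ws
  induction ws with
  | nil => intro u h; simp at h
  | cons a t ih =>
    intro u hhead hchain k hk
    have ha : a = u := by simpa using hhead
    match k with
    | 0 => simpa using ha
    | k + 1 =>
      have htne : t ≠ [] := by
        intro he; rw [he] at hk; simp at hk
      unfold List.Chain' at hchain
      rw [List.isChain_cons] at hchain
      have hth : t.head? = some (σfix u) := by
        rw [List.head?_eq_head htne]
        have := hchain.1 (t.head htne) (by simp [List.head?_eq_head htne])
        rw [ha] at this
        rw [this]
      have := ih (σfix u) hth hchain.2 k (by simpa using Nat.lt_of_succ_lt_succ hk)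
      simpa [Function.iterate_succ_apply] using this

lemma cp_len_le {V : Type*} {σfix : V → V} {u v₀ : V} {l1 l2 : List V}
    (h1 : ∀ k (hk : k < l1.length), l1.get ⟨k, hk⟩ = σfix^[k] u)
    (hv : σfix^[l2.length] u = v₀) (hnv : v₀ ∉ l1) :
    l1.length ≤ l2.length := by
  by_contra hc
  push_neg at hc
  have := h1 l2.length hc
  exact hnv (by rw [← hv, ← this]; exact List.get_mem _ _)

section main
variable {V : Type*} {σ : V → V} {C : Set V} {r u v₀ : V} {σfix : V → V} {vs : List V}

-- derived facts from one side of the repair data (statement-level CPRepair is unpacked manually)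
lemma cp_rev_facts
    (hC : ∀ x ∈ C, σ x ∈ C)
    (hne : vs ≠ []) (hlast : vs.getLast? = some u)
    (hheadfix : σfix (vs.head hne) = v₀)
    (hchainfix : List.Chain' (fun a b => σfix b = a) vs) :
    (∀ k (hk : k < vs.reverse.length), vs.reverse.get ⟨k, hk⟩ = σfix^[k] u) ∧
      σfix^[vs.length] u = v₀ := by
  have hwne : vs.reverse ≠ [] := by simpa using hne
  have hhead' : vs.reverse.head? = some u := by rw [List.head?_reverse]; exact hlast
  have hchw : List.Chain' (fun a b => σfix a = b) vs.reverse :=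
    List.isChain_reverse.mpr hchainfix
  have hget := cp_get_iterate vs.reverse u hhead' hchw
  refine ⟨hget, ?_⟩
  have hlen1 : 1 ≤ vs.length := List.length_pos_iff.mpr hne
  have hgl : vs.reverse.getLast hwne = vs.head hne := by
    simp [List.getLast_reverse]
  have : vs.reverse.getLast hwne = σfix^[vs.length - 1] u := by
    rw [List.getLast_eq_getElem]
    have := hget (vs.reverse.length - 1) (by simp; omega)
    simpa using this
  have h2 : σfix^[vs.length - 1 + 1] u = v₀ := by
    rw [Function.iterate_succ_apply', ← this, hgl, hheadfix]
  have : vs.length - 1 + 1 = vs.length := by omega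
  rwa [this] at h2

end main

/-- Injectivity of the cycle-popping repair map `φ : (σ, u) ↦ (σfix, v₀, u → u')`:
the original assignment `σ` (and hence its unique cycle) is uniquely determined by
the repaired spanning tree `σfix`, the vertex `v₀`, and the arc `u → u' = σ u`. -/
theorem cp_repair_injective {V : Type*} [Fintype V]
    (G : SimpleGraph V) (hG : G.Connected) (r : V)
    (σ σ' : V → V) (C C' : Set V) (u v₀ : V) (σfix : V → V) (vs vs' : List V)
    (h : CPRepair G r σ C u v₀ σfix vs)
    (h' : CPRepair G r σ' C' u v₀ σfix vs')
    (hu' : σ u = σ' u) :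
    σ = σ' ∧ C = C' := by
  obtain ⟨hadj, hcyc, hrC, huniq, huC, hne, hnd, hlast, hrvs, hchain, hrtg, hhead, hchainfix,
    hout⟩ := h
  obtain ⟨hadj', hcyc', hrC', huniq', huC', hne', hnd', hlast', hrvs', hchain', hrtg', hhead',
    hchainfix', hout'⟩ := h'
  -- v₀ is not in vs nor vs'
  have hv₀vs : v₀ ∉ vs := by
    intro hmem
    obtain ⟨n, hn⟩ := cp_rtg_iterate hrtg
    exact cp_no_reach hcyc.2.1 hrC huC hlast hrvs hchain v₀ hmem n hn
  have hv₀vs' : v₀ ∉ vs' := by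
    intro hmem
    obtain ⟨n, hn⟩ := cp_rtg_iterate hrtg'
    exact cp_no_reach hcyc'.2.1 hrC' huC' hlast' hrvs' hchain' v₀ hmem n hn
  -- head facts
  have hh1 : σfix (vs.head hne) = v₀ :=
    (hhead (vs.head hne) (by simp [List.head?_eq_head hne])).2.2
  have hh1' : σfix (vs'.head hne') = v₀ :=
    (hhead' (vs'.head hne') (by simp [List.head?_eq_head hne'])).2.2
  obtain ⟨hget, hv⟩ := cp_rev_facts hcyc.2.1 hne hlast hh1 hchainfix
  obtain ⟨hget', hv'⟩ := cp_rev_facts hcyc'.2.1 hne' hlast' hh1' hchainfix'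
  -- lengths are equal
  have hlen : vs.length = vs'.length := by
    have h1 : vs.reverse.length ≤ vs'.length :=
      cp_len_le hget hv' (by simpa using hv₀vs)
    have h2 : vs'.reverse.length ≤ vs.length :=
      cp_len_le hget' hv (by simpa using hv₀vs')
    simp at h1 h2
    omega
  -- the lists are equal
  have hvs : vs = vs' := by
    rw [← List.reverse_inj]
    refine List.ext_get (by simpa using hlen) (fun n h₁ h₂ => ?_)
    rw [hget n h₁, hget' n h₂]
  subst hvs
  -- σ = σ'
  have hσ : σ = σ' := by
    funext x
    by_cases hx : x ∈ vs
    · obtain ⟨i, hi⟩ := List.get_of_mem hx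
      rcases Nat.lt_or_ge ((i : ℕ) + 1) vs.length with hlt | hge
      · have e1 := List.isChain_iff_getElem.mp hchain i (by omega)
        have e2 := List.isChain_iff_getElem.mp hchain' i (by omega)
        simp only [List.get_eq_getElem] at hi
        rw [hi] at e1 e2
        rw [e1, e2]
      · -- i is the last index, so x = u
        have hxu : x = u := by
          have hune : vs.getLast hne = u := by
            rw [List.getLast?_eq_getLast hne] at hlast
            exact Option.some.inj hlast
          rw [← hi, ← hune, List.getLast_eq_getElem, List.get_eq_getElem]
          congr 1
          have := i.2
          omega
        rw [hxu]; exact hu'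
    · rw [← hout x hx]; exact hout' x hx
  exact ⟨hσ, (huniq C' (hσ ▸ hcyc') hrC').symm⟩
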